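/- Let M be a complex n×n matrix with singular values m_1 ≤ … ≤ m_n. For any choice of p rows i_1,…,i_p and p columns j_1,…,j_p, the absolute value of the determinant of the corresponding p×p submatrix is bounded by the product of the p largest singular values: |det M_{[i_1…i_p][j_1…j_p]}| ≤ m_n · m_{n-1} ⋯ m_{n-p+1}. -/

import Mathlib

open Matrix

open Polynomial in
/-- `m` is the (increasingly ordered) tuple of singular values of `M`. -/
def IsSingularValues {n : ℕ} (M : Matrix (Fin n) (Fin n) ℂ) (m : Fin n → ℝ) : Prop :=
  (∀ i, 0 ≤ m i) ∧ Monotone m ∧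
    (Mᴴ * M).charpoly = ∏ i : Fin n, (X - C ((m i : ℂ) ^ 2))

/-- The finset of strictly monotone maps `Fin p → Fin n`. -/
noncomputable def monoSet (p n : ℕ) : Finset (Fin p → Fin n) :=
  open scoped Classical in Finset.univ.filter (fun g => StrictMono g)

theorem mem_monoSet {p n : ℕ} {g : Fin p → Fin n} : g ∈ monoSet p n ↔ StrictMono g := by
  simp [monoSet]

/-- Values of a strictly monotone map `Fin p → Fin n` are at most `n - p + k`. -/
theorem strictMono_val_le {p n : ℕ} {t : Fin p → Fin n} (ht : StrictMono t) (k : Fin p) :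
    (t k : ℕ) ≤ n - p + (k : ℕ) := by
  have key : ∀ d : ℕ, ∀ h : (k : ℕ) + d < p, (t k : ℕ) + d ≤ (t ⟨(k : ℕ) + d, h⟩ : ℕ) := by
    intro d
    induction d with
    | zero =>
      intro h
      have : (⟨(k : ℕ) + 0, h⟩ : Fin p) = k := by ext; simp
      rw [this]; omega
    | succ d ih =>
      intro h
      have h' : (k : ℕ) + d < p := by omega
      have h1 := ih h'
      have h2 : t ⟨(k : ℕ) + d, h'⟩ < t ⟨(k : ℕ) + d + 1, h⟩ := by
        apply ht
        rw [Fin.lt_def]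
        simp
      rw [Fin.lt_def] at h2
      show (t k : ℕ) + (d + 1) ≤ (t ⟨(k : ℕ) + d + 1, h⟩ : ℕ)
      omega
  have hk : (k : ℕ) < p := k.isLt
  have h2 := key (p - 1 - (k : ℕ)) (by omega)
  have h3 : ((t ⟨(k : ℕ) + (p - 1 - (k : ℕ)), by omega⟩ : Fin n) : ℕ) < n := Fin.is_lt _
  omega

/-- Any injective map `Fin p → Fin n` factors as a strictly monotone map after a permutation. -/
theorem exists_mono_perm {p n : ℕ} {f : Fin p → Fin n} (hf : Function.Injective f) :
    ∃ (g : Fin p → Fin n) (σ : Equiv.Perm (Fin p)), StrictMono g ∧ f = g ∘ σ := by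
  classical
  set s : Finset (Fin n) := Finset.univ.image f with hs_def
  have hs : s.card = p := by
    rw [hs_def, Finset.card_image_of_injective _ hf, Finset.card_univ, Fintype.card_fin]
  have hmem : ∀ a, f a ∈ s := fun a => Finset.mem_image_of_mem f (Finset.mem_univ a)
  set u : Fin p → Fin p := fun a => (s.orderIsoOfFin hs).symm ⟨f a, hmem a⟩ with hu_def
  have hu_inj : Function.Injective u := by
    intro a b hab
    apply hf
    have := congrArg (fun x => ((s.orderIsoOfFin hs) x : Fin n)) hab
    simpa [hu_def] using this
  have hu_bij := Finite.injective_iff_bijective.mp hu_inj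
  refine ⟨s.orderEmbOfFin hs, Equiv.ofBijective u hu_bij, (s.orderEmbOfFin hs).strictMono, ?_⟩
  funext a
  show f a = s.orderEmbOfFin hs (u a)
  rw [← Finset.coe_orderIsoOfFin_apply, hu_def, OrderIso.apply_symm_apply]

theorem strictMono_unique {p n : ℕ} {g g' : Fin p → Fin n} (hg : StrictMono g)
    (hg' : StrictMono g') (h : Finset.univ.image g = Finset.univ.image g') : g = g' := by
  classical
  have hc : (Finset.univ.image g).card = p := by
    rw [Finset.card_image_of_injective _ hg.injective, Finset.card_univ, Fintype.card_fin]
  have h1 := Finset.orderEmbOfFin_unique hc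
    (fun x => Finset.mem_image_of_mem g (Finset.mem_univ x)) hg
  have h2 := Finset.orderEmbOfFin_unique hc
    (fun x => h ▸ Finset.mem_image_of_mem g' (Finset.mem_univ x)) hg'
  exact h1.trans h2.symm

/-- Cauchy–Binet formula. -/
theorem cauchy_binet {R : Type*} [CommRing R] {p n : ℕ}
    (A : Matrix (Fin p) (Fin n) R) (B : Matrix (Fin n) (Fin p) R) :
    (A * B).det = ∑ g ∈ monoSet p n, (A.submatrix id g).det * (B.submatrix g id).det := by
  classical
  have step1 : (A * B).det = ∑ f : Fin p → Fin n, (A.submatrix id f).det * ∏ i, B (f i) i := by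
    rw [det_apply']
    simp only [mul_apply]
    have expand : ∀ σ : Equiv.Perm (Fin p), (∏ i, ∑ k, A (σ i) k * B k i)
        = ∑ f : Fin p → Fin n, ∏ i, A (σ i) (f i) * B (f i) i := by
      intro σ
      rw [Finset.prod_univ_sum]
      rw [Fintype.piFinset_univ]
    simp_rw [expand, Finset.mul_sum]
    rw [Finset.sum_comm]
    refine Finset.sum_congr rfl fun f _ => ?_
    rw [det_apply', Finset.sum_mul]
    refine Finset.sum_congr rfl fun σ _ => ?_
    rw [Finset.prod_mul_distrib, ← mul_assoc]
    simp [submatrix_apply]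
  have hzero : ∀ f : Fin p → Fin n, ¬ Function.Injective f → (A.submatrix id f).det = 0 := by
    intro f hf
    obtain ⟨i, j, hij, hne⟩ := Function.not_injective_iff.mp hf
    exact det_zero_of_column_eq hne fun k => by simp [submatrix_apply, hij]
  have hfilter : (A * B).det = ∑ f ∈ Finset.univ.filter
      (fun f : Fin p → Fin n => Function.Injective f),
      (A.submatrix id f).det * ∏ i, B (f i) i := by
    rw [step1]
    refine (Finset.sum_filter_of_ne ?_).symm
    intro f _ hne
    by_contra hinj
    exact hne (by rw [hzero f hinj, zero_mul])
  have main : ∑ f ∈ Finset.univ.filter (fun f : Fin p → Fin n => Function.Injective f),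
      (A.submatrix id f).det * ∏ i, B (f i) i
      = ∑ x ∈ (monoSet p n) ×ˢ (Finset.univ : Finset (Equiv.Perm (Fin p))),
        (A.submatrix id (x.1 ∘ x.2)).det * ∏ i, B ((x.1 ∘ x.2) i) i := by
    refine (Finset.sum_bij (fun x _ => x.1 ∘ x.2) ?_ ?_ ?_ ?_).symm
    · rintro ⟨g, σ⟩ hx
      have hg : StrictMono g := mem_monoSet.mp (Finset.mem_product.mp hx).1
      simp only [Finset.mem_filter, Finset.mem_univ, true_and]
      exact hg.injective.comp σ.injective
    · rintro ⟨g, σ⟩ hgs ⟨g', σ'⟩ hgs' hcomp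
      replace hcomp : g ∘ σ = g' ∘ σ' := hcomp
      have hg : StrictMono g := mem_monoSet.mp (Finset.mem_product.mp hgs).1
      have hg' : StrictMono g' := mem_monoSet.mp (Finset.mem_product.mp hgs').1
      have himg : Finset.univ.image g = Finset.univ.image g' := by
        have h1 : Finset.univ.image (g ∘ σ) = Finset.univ.image g := by
          rw [← Finset.image_image, Finset.image_univ_of_surjective σ.surjective]
        have h2 : Finset.univ.image (g' ∘ σ') = Finset.univ.image g' := by
          rw [← Finset.image_image, Finset.image_univ_of_surjective σ'.surjective]
        rw [← h1, ← h2, hcomp]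
      have hgg : g = g' := strictMono_unique hg hg' himg
      have hσ : σ = σ' := by
        ext a
        have h3 := congrFun hcomp a
        rw [hgg] at h3
        exact congrArg Fin.val (hg'.injective h3)
      rw [Prod.mk.injEq]
      exact ⟨hgg, by rw [hσ]⟩
    · intro f hf
      obtain ⟨g, σ, hg, hfgσ⟩ := exists_mono_perm (Finset.mem_filter.mp hf).2
      exact ⟨(g, σ), Finset.mem_product.mpr ⟨mem_monoSet.mpr hg, Finset.mem_univ _⟩, hfgσ.symm⟩
    · exact fun x hx => rfl
  rw [hfilter, main, Finset.sum_product]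
  refine Finset.sum_congr rfl fun g hg => ?_
  rw [det_apply' (B.submatrix g id), Finset.mul_sum]
  refine Finset.sum_congr rfl fun σ _ => ?_
  have hA : A.submatrix id (g ∘ σ) = (A.submatrix id g).submatrix id σ := by
    ext a b; simp
  rw [hA, det_permute']
  simp only [submatrix_apply, id_eq, Function.comp_apply]
  ring

/-- Gram expansion: `det (Bᴴ B)` as a sum of squares of subdeterminants. -/
theorem gram_expansion {p n : ℕ} (B : Matrix (Fin n) (Fin p) ℂ) :
    (Bᴴ * B).det = ((∑ g ∈ monoSet p n,
      Complex.normSq ((B.submatrix g id).det) : ℝ) : ℂ) := by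
  rw [cauchy_binet]
  push_cast
  refine Finset.sum_congr rfl fun g _ => ?_
  have h1 : (Bᴴ).submatrix id g = (B.submatrix g id)ᴴ := by
    ext a b; simp [conjTranspose_apply]
  rw [h1, det_conjTranspose, Complex.normSq_eq_conj_mul_self]
  rfl

open Finset in
/-- A product of `p` values of a monotone nonnegative function at distinct points is at
most the product of the `p` largest values. -/
theorem prod_inj_le {n p : ℕ} (hpn : p ≤ n) {μ : Fin n → ℝ}
    (hμ0 : ∀ i, 0 ≤ μ i) (hμ : Monotone μ) {h : Fin p → Fin n} (hh : Function.Injective h) :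
    ∏ a, μ (h a) ≤ ∏ i ∈ Finset.univ.filter (fun i : Fin n => n - p ≤ (i : ℕ)), μ i := by
  classical
  set s := Finset.univ.image h with hs_def
  have hcard : s.card = p := by
    rw [hs_def, card_image_of_injective _ hh, card_univ, Fintype.card_fin]
  set t := s.orderEmbOfFin hcard with ht_def
  have h1 : ∏ a, μ (h a) = ∏ j ∈ s, μ j :=
    (Finset.prod_image fun x _ y _ e => hh e).symm
  have himg : Finset.univ.image ⇑t = s := by
    apply Finset.eq_of_subset_of_card_le
    · intro j hj
      obtain ⟨k, _, rfl⟩ := Finset.mem_image.mp hj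
      exact s.orderEmbOfFin_mem hcard k
    · rw [hcard, card_image_of_injective _ t.injective, card_univ, Fintype.card_fin]
  have h2 : ∏ j ∈ s, μ j = ∏ k : Fin p, μ (t k) := by
    rw [← himg, Finset.prod_image fun x _ y _ e => t.injective e]
  have hfilter : Finset.univ.filter (fun i : Fin n => n - p ≤ (i : ℕ))
      = Finset.univ.image (fun k : Fin p => (⟨n - p + (k : ℕ), by have := k.isLt; omega⟩ : Fin n)) := by
    ext i
    simp only [mem_filter, mem_univ, true_and, mem_image]
    constructor
    · intro hi
      have hlt := i.isLt
      refine ⟨⟨(i : ℕ) - (n - p), by omega⟩, ?_⟩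
      ext
      simp only []
      omega
    · rintro ⟨k, rfl⟩
      simp
  have h3 : ∏ k : Fin p, μ (t k)
      ≤ ∏ k : Fin p, μ (⟨n - p + (k : ℕ), by have := k.isLt; omega⟩ : Fin n) := by
    refine Finset.prod_le_prod (fun k _ => hμ0 _) (fun k _ => hμ ?_)
    rw [Fin.le_def]
    exact strictMono_val_le t.strictMono k
  have h4 : ∏ i ∈ Finset.univ.filter (fun i : Fin n => n - p ≤ (i : ℕ)), μ i
      = ∏ k : Fin p, μ (⟨n - p + (k : ℕ), by have := k.isLt; omega⟩ : Fin n) := by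
    rw [hfilter]
    exact Finset.prod_image fun x _ y _ e => by
      have : n - p + (x : ℕ) = n - p + (y : ℕ) := congrArg Fin.val e
      exact Fin.ext (by omega)
  rw [h1, h2, h4]
  exact h3

theorem multiset_map_perm {α : Type*} {n : ℕ} (f : Fin n → α) (σ : Equiv.Perm (Fin n)) :
    Multiset.map (f ∘ σ) Finset.univ.val = Multiset.map f Finset.univ.val := by
  rw [← Multiset.map_map]
  congr 1
  calc Multiset.map (⇑σ) Finset.univ.val = (Finset.univ.map σ.toEmbedding).val := by
        rw [Finset.map_val]; rfl
    _ = Finset.univ.val := by rw [Finset.map_univ_equiv]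

theorem mono_eq_of_multiset_eq {n : ℕ} {f g : Fin n → ℝ} (hf : Monotone f) (hg : Monotone g)
    (h : Multiset.map f Finset.univ.val = Multiset.map g Finset.univ.val) : f = g := by
  apply List.ofFn_injective
  refine List.Perm.eq_of_sortedLE (List.sortedLE_ofFn_iff.mpr hf)
    (List.sortedLE_ofFn_iff.mpr hg) ?_
  rw [← Multiset.coe_eq_coe]
  calc (↑(List.ofFn f) : Multiset ℝ) = Multiset.map f Finset.univ.val := (Fin.univ_val_map f).symm
    _ = Multiset.map g Finset.univ.val := h
    _ = ↑(List.ofFn g) := Fin.univ_val_map g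

open Polynomial in
theorem roots_prod_X_sub_C_fin {n : ℕ} (a : Fin n → ℂ) :
    (∏ i, (X - C (a i))).roots = Multiset.map a Finset.univ.val := by
  have h1 : ∏ i, (X - C (a i))
      = ((Multiset.map a Finset.univ.val).map (fun x => X - C x)).prod := by
    rw [Multiset.map_map, Finset.prod_eq_multiset_prod]
    rfl
  rw [h1, roots_multiset_prod_X_sub_C]

open Polynomial in
theorem charpoly_unitary {n : ℕ} (U : Matrix.unitaryGroup (Fin n) ℂ) (d : Fin n → ℂ) :
    ((U : Matrix (Fin n) (Fin n) ℂ) * Matrix.diagonal d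
      * (star U : Matrix (Fin n) (Fin n) ℂ)).charpoly = ∏ i, (X - C (d i)) := by
  set Uc := (U : Matrix (Fin n) (Fin n) ℂ) with hUc
  have hU1 : Uc * star Uc = 1 := Matrix.mem_unitaryGroup_iff.mp U.2
  set CM := (C : ℂ →+* ℂ[X])
  have hcm : charmatrix (Uc * Matrix.diagonal d * star Uc)
      = (Uc.map CM) * charmatrix (Matrix.diagonal d) * ((star Uc).map CM) := by
    rw [charmatrix]
    rw [charmatrix]
    simp only [RingHom.mapMatrix_apply]
    rw [Matrix.mul_sub, Matrix.sub_mul]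
    have hscal : Uc.map CM * Matrix.scalar (Fin n) (X : ℂ[X]) * (star Uc).map CM
        = Matrix.scalar (Fin n) (X : ℂ[X]) := by
      rw [show Uc.map ⇑CM * Matrix.scalar (Fin n) (X : ℂ[X])
          = Matrix.scalar (Fin n) (X : ℂ[X]) * Uc.map ⇑CM from
          (Matrix.scalar_commute _ (fun r => Commute.all _ _) _).symm]
      rw [Matrix.mul_assoc, ← Matrix.map_mul, hU1,
        Matrix.map_one _ (map_zero CM) (map_one CM), Matrix.mul_one]
    rw [hscal, ← Matrix.map_mul, ← Matrix.map_mul]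
  have hdiag : charmatrix (Matrix.diagonal d) = Matrix.diagonal (fun i => X - C (d i)) := by
    ext i j
    by_cases hij : i = j
    · subst hij; simp [charmatrix_apply_eq]
    · rw [charmatrix_apply_ne _ _ _ hij, Matrix.diagonal_apply_ne _ hij,
        Matrix.diagonal_apply_ne _ hij, map_zero, neg_zero]
  have hU1' : star Uc * Uc = 1 := Matrix.mem_unitaryGroup_iff'.mp U.2
  have hdet : ((star Uc).map CM).det * (Uc.map CM).det = 1 := by
    have e1 : (Uc.map CM).det = CM Uc.det := by
      rw [← RingHom.mapMatrix_apply, ← RingHom.map_det]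
    have e2 : ((star Uc).map CM).det = CM (star Uc).det := by
      rw [← RingHom.mapMatrix_apply, ← RingHom.map_det]
    rw [e1, e2, ← _root_.map_mul, ← det_mul, hU1', det_one, _root_.map_one]
  rw [Matrix.charpoly, hcm, det_mul, det_mul, mul_comm, ← mul_assoc, hdet, one_mul,
    hdiag, det_diagonal]

open Polynomial in
theorem charpoly_hermitian {n : ℕ} {H : Matrix (Fin n) (Fin n) ℂ} (hH : H.IsHermitian) :
    H.charpoly = ∏ i, (X - C ((hH.eigenvalues i : ℂ))) := by
  conv_lhs => rw [hH.spectral_theorem, Unitary.conjStarAlgAut_apply]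
  rw [charpoly_unitary hH.eigenvectorUnitary (RCLike.ofReal ∘ hH.eigenvalues)]
  rfl

/-- The key compression bound. -/
theorem det_compress_le {n p : ℕ} (W : Matrix (Fin n) (Fin p) ℂ) (hW : Wᴴ * W = 1)
    (lam : Fin n → ℝ) (hlam0 : ∀ i, 0 ≤ lam i) {t : ℝ}
    (ht : ∀ g : Fin p → Fin n, StrictMono g → ∏ a, lam (g a) ≤ t) {S : ℝ}
    (hS : (S : ℂ) = (Wᴴ * (Matrix.diagonal (fun i => ((lam i : ℝ) : ℂ)) * W)).det) :
    S ≤ t := by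
  classical
  set E : Matrix (Fin n) (Fin n) ℂ :=
    Matrix.diagonal (fun i => ((Real.sqrt (lam i) : ℝ) : ℂ)) with hE
  have hEE : Eᴴ * E = Matrix.diagonal (fun i => ((lam i : ℝ) : ℂ)) := by
    rw [hE, Matrix.diagonal_conjTranspose, Matrix.diagonal_mul_diagonal]
    ext i j
    by_cases hij : i = j
    · subst hij
      simp only [Matrix.diagonal_apply_eq, Pi.star_apply, Complex.star_def,
        Complex.conj_ofReal, ← Complex.ofReal_mul, Real.mul_self_sqrt (hlam0 i)]
    · simp [Matrix.diagonal_apply_ne _ hij]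
  have hfact : Wᴴ * (Matrix.diagonal (fun i => ((lam i : ℝ) : ℂ)) * W)
      = (E * W)ᴴ * (E * W) := by
    rw [conjTranspose_mul, Matrix.mul_assoc, ← Matrix.mul_assoc Eᴴ E W, hEE]
  have h1 : (S : ℂ) = ((∑ g ∈ monoSet p n,
      Complex.normSq (((E * W).submatrix g id).det) : ℝ) : ℂ) := by
    rw [hS, hfact, gram_expansion]
  have hSval : S = ∑ g ∈ monoSet p n, Complex.normSq (((E * W).submatrix g id).det) :=
    Complex.ofReal_injective h1
  have hterm : ∀ g : Fin p → Fin n, Complex.normSq (((E * W).submatrix g id).det)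
      = (∏ a, lam (g a)) * Complex.normSq ((W.submatrix g id).det) := by
    intro g
    have hsub : (E * W).submatrix g id
        = Matrix.diagonal (fun a => ((Real.sqrt (lam (g a)) : ℝ) : ℂ)) * W.submatrix g id := by
      ext a b
      rw [Matrix.submatrix_apply, hE, Matrix.diagonal_mul, Matrix.diagonal_mul,
        Matrix.submatrix_apply]
    rw [hsub, det_mul, det_diagonal, map_mul Complex.normSq, map_prod Complex.normSq]
    congr 1
    refine Finset.prod_congr rfl fun a _ => ?_
    rw [Complex.normSq_ofReal, Real.mul_self_sqrt (hlam0 (g a))]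
  have hWsum : ∑ g ∈ monoSet p n, Complex.normSq ((W.submatrix g id).det) = 1 := by
    have h2 : ((∑ g ∈ monoSet p n, Complex.normSq ((W.submatrix g id).det) : ℝ) : ℂ) = 1 := by
      rw [← gram_expansion, hW, det_one]
    exact_mod_cast h2
  calc S = ∑ g ∈ monoSet p n, (∏ a, lam (g a)) * Complex.normSq ((W.submatrix g id).det) := by
        rw [hSval]; exact Finset.sum_congr rfl fun g _ => hterm g
    _ ≤ ∑ g ∈ monoSet p n, t * Complex.normSq ((W.submatrix g id).det) :=
        Finset.sum_le_sum fun g hg =>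
          mul_le_mul_of_nonneg_right (ht g (mem_monoSet.mp hg)) (Complex.normSq_nonneg _)
    _ = t := by rw [← Finset.mul_sum, hWsum, mul_one]

open scoped ComplexOrder

/-- The absolute value of the determinant of any `p × p` submatrix is bounded by the
product of the `p` largest singular values. -/
theorem subdet_le_prod_largest_singular_values {n p : ℕ} (hpn : p ≤ n)
    (M : Matrix (Fin n) (Fin n) ℂ) (m : Fin n → ℝ) (hm : IsSingularValues M m)
    (r c : Fin p → Fin n) (hr : Function.Injective r) (hc : Function.Injective c) :
    ‖(M.submatrix r c).det‖ ≤
      ∏ i ∈ Finset.univ.filter (fun i : Fin n => n - p ≤ (i : ℕ)), m i := by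
  classical
  obtain ⟨hm0, hmono, hchar⟩ := hm
  have hHher : (Mᴴ * M).IsHermitian := isHermitian_conjTranspose_mul_self M
  have hlam0 : ∀ i, 0 ≤ hHher.eigenvalues i := fun i =>
    (Matrix.posSemidef_conjTranspose_mul_self M).eigenvalues_nonneg i
  have hmsreal : Multiset.map hHher.eigenvalues Finset.univ.val
      = Multiset.map (fun i => m i ^ 2) Finset.univ.val := by
    have h1 := congrArg Polynomial.roots ((charpoly_hermitian hHher).symm.trans hchar)
    rw [roots_prod_X_sub_C_fin, roots_prod_X_sub_C_fin] at h1
    have h2 : Multiset.map Complex.ofReal (Multiset.map hHher.eigenvalues Finset.univ.val)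
        = Multiset.map Complex.ofReal (Multiset.map (fun i => m i ^ 2) Finset.univ.val) := by
      rw [Multiset.map_map, Multiset.map_map]
      refine h1.trans ?_
      refine Multiset.map_congr rfl fun i _ => ?_
      simp only [Function.comp_apply, Complex.ofReal_pow]
    exact Multiset.map_injective Complex.ofReal_injective h2
  have hμmono : Monotone (fun i : Fin n => m i ^ 2) := by
    intro a b hab
    have h := hmono hab
    have := hm0 a
    simp only []
    nlinarith
  have heq : hHher.eigenvalues ∘ (Tuple.sort hHher.eigenvalues) = fun i => m i ^ 2 := by
    refine mono_eq_of_multiset_eq (Tuple.monotone_sort _) hμmono ?_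
    rw [multiset_map_perm]
    exact hmsreal
  have hbound : ∀ g : Fin p → Fin n, StrictMono g → ∏ a, hHher.eigenvalues (g a)
      ≤ ∏ i ∈ Finset.univ.filter (fun i : Fin n => n - p ≤ (i : ℕ)), m i ^ 2 := by
    intro g hg
    have hrw : ∀ a : Fin p, hHher.eigenvalues (g a)
        = (fun i : Fin n => m i ^ 2) (((Tuple.sort hHher.eigenvalues).symm ∘ g) a) := by
      intro a
      conv_rhs => rw [← heq]
      simp only [Function.comp_apply, Equiv.apply_symm_apply]
    calc ∏ a, hHher.eigenvalues (g a)
        = ∏ a, (fun i : Fin n => m i ^ 2) (((Tuple.sort hHher.eigenvalues).symm ∘ g) a) :=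
          Finset.prod_congr rfl fun a _ => hrw a
      _ ≤ _ := prod_inj_le hpn (fun i => sq_nonneg (m i)) hμmono
          ((Equiv.injective _).comp hg.injective)
  set Uc : Matrix (Fin n) (Fin n) ℂ := (hHher.eigenvectorUnitary : Matrix (Fin n) (Fin n) ℂ)
    with hUcdef
  have hU1 : Uc * star Uc = 1 := Matrix.mem_unitaryGroup_iff.mp hHher.eigenvectorUnitary.2
  set W : Matrix (Fin n) (Fin p) ℂ := (star Uc).submatrix id c with hWdef
  have hWW : Wᴴ * W = 1 := by
    ext a b
    have h2 : (Uc * star Uc) (c a) (c b) = (1 : Matrix (Fin n) (Fin n) ℂ) (c a) (c b) := by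
      rw [hU1]
    rw [mul_apply] at h2
    simp only [mul_apply, conjTranspose_apply, hWdef, submatrix_apply, id_eq, star_apply,
      star_star] at h2 ⊢
    rw [h2, Matrix.one_apply, Matrix.one_apply]
    simp [hc.eq_iff]
  set B : Matrix (Fin n) (Fin p) ℂ := M.submatrix id c with hBdef
  have hkey : Bᴴ * B = Wᴴ * (Matrix.diagonal (fun i => ((hHher.eigenvalues i : ℝ) : ℂ)) * W) := by
    have hBH : Bᴴ * B = (Mᴴ * M).submatrix c c := by
      ext a b
      simp [hBdef, mul_apply, conjTranspose_apply, submatrix_apply]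
    rw [hBH]
    have hspec := hHher.spectral_theorem
    ext a b
    rw [submatrix_apply]
    have hentry : (Mᴴ * M) (c a) (c b)
        = ((Uc * Matrix.diagonal ((RCLike.ofReal : ℝ → ℂ) ∘ hHher.eigenvalues) * star Uc :
            Matrix (Fin n) (Fin n) ℂ)) (c a) (c b) := by
      conv_lhs => rw [hspec, Unitary.conjStarAlgAut_apply]
    rw [hentry, mul_apply, mul_apply]
    refine Finset.sum_congr rfl fun k _ => ?_
    rw [Matrix.mul_diagonal, Matrix.diagonal_mul]
    simp only [conjTranspose_apply, hWdef, submatrix_apply, id_eq, star_apply, star_star,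
      Function.comp_apply]
    exact mul_assoc _ _ _
  have hgram := gram_expansion B
  obtain ⟨g₀, σ₀, hg₀, hrg⟩ := exists_mono_perm hr
  have hsub : M.submatrix r c = (B.submatrix g₀ id).submatrix σ₀ id := by
    ext a b
    simp [hBdef, hrg, Function.comp]
  have habs1 : Complex.normSq ((M.submatrix r c).det)
      = Complex.normSq ((B.submatrix g₀ id).det) := by
    rw [hsub, det_permute, map_mul Complex.normSq]
    rcases Int.units_eq_one_or (Equiv.Perm.sign σ₀) with h | h <;> rw [h] <;> simp
  have hS1 : Complex.normSq ((M.submatrix r c).det)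
      ≤ ∑ g ∈ monoSet p n, Complex.normSq ((B.submatrix g id).det) := by
    rw [habs1]
    exact Finset.single_le_sum (f := fun g => Complex.normSq ((B.submatrix g id).det))
      (fun g _ => Complex.normSq_nonneg _) (mem_monoSet.mpr hg₀)
  have hSle : (∑ g ∈ monoSet p n, Complex.normSq ((B.submatrix g id).det))
      ≤ ∏ i ∈ Finset.univ.filter (fun i : Fin n => n - p ≤ (i : ℕ)), m i ^ 2 :=
    det_compress_le W hWW hHher.eigenvalues hlam0 hbound (hgram.symm.trans (congrArg det hkey))
  have hfinal : Complex.normSq ((M.submatrix r c).det)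
      ≤ ∏ i ∈ Finset.univ.filter (fun i : Fin n => n - p ≤ (i : ℕ)), m i ^ 2 :=
    le_trans hS1 hSle
  have hT0 : 0 ≤ ∏ i ∈ Finset.univ.filter (fun i : Fin n => n - p ≤ (i : ℕ)), m i :=
    Finset.prod_nonneg fun i _ => hm0 i
  have hsq : ‖(M.submatrix r c).det‖ ^ 2
      ≤ (∏ i ∈ Finset.univ.filter (fun i : Fin n => n - p ≤ (i : ℕ)), m i) ^ 2 := by
    rw [Complex.sq_norm, ← Finset.prod_pow]
    exact hfinal
  nlinarith [norm_nonneg ((M.submatrix r c).det), hT0, hsq]
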